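/- For every integer p ≥ 2, Q⁰(z^p w̄^p) = (p+2)(p+1)p²(p−1)² · z^{p+2} w̄^{p−2}, and likewise Q⁰(w^p z̄^p) = (p+2)(p+1)p²(p−1)² · w^{p+2} z̄^{p−2}. -/

import Mathlib

noncomputable section

open Complex Matrix Set

/-- Wirtinger derivative `∂/∂z` (first coordinate) of `f : ℂ × ℂ → ℂ`. -/
def wdz (f : ℂ × ℂ → ℂ) (p : ℂ × ℂ) : ℂ :=
  (fderiv ℝ f p (1, 0) - Complex.I * fderiv ℝ f p (Complex.I, 0)) / 2

/-- Wirtinger derivative `∂/∂z̄` (first coordinate). -/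
def wdzb (f : ℂ × ℂ → ℂ) (p : ℂ × ℂ) : ℂ :=
  (fderiv ℝ f p (1, 0) + Complex.I * fderiv ℝ f p (Complex.I, 0)) / 2

/-- Wirtinger derivative `∂/∂w` (second coordinate). -/
def wdw (f : ℂ × ℂ → ℂ) (p : ℂ × ℂ) : ℂ :=
  (fderiv ℝ f p (0, 1) - Complex.I * fderiv ℝ f p (0, Complex.I)) / 2

/-- Wirtinger derivative `∂/∂w̄` (second coordinate). -/
def wdwb (f : ℂ × ℂ → ℂ) (p : ℂ × ℂ) : ℂ :=
  (fderiv ℝ f p (0, 1) + Complex.I * fderiv ℝ f p (0, Complex.I)) / 2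

/-- The operator `L := -ρ_w ∂_z + ρ_z ∂_w` associated with `ρ`. -/
def Lop (ρ f : ℂ × ℂ → ℂ) : ℂ × ℂ → ℂ :=
  fun p => -(wdw ρ p) * wdz f p + wdz ρ p * wdw f p

/-- The operator `L̄ := -ρ_w̄ ∂_z̄ + ρ_z̄ ∂_w̄` associated with `ρ`. -/
def Lbar (ρ f : ℂ × ℂ → ℂ) : ℂ × ℂ → ℂ :=
  fun p => -(wdwb ρ p) * wdzb f p + wdzb ρ p * wdwb f p

/-- The function `ρ_{Z²}(L,L) = ρ_zz ρ_w² - 2 ρ_zw ρ_z ρ_w + ρ_ww ρ_z²`. -/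
def rhoZ2LL (ρ : ℂ × ℂ → ℂ) : ℂ × ℂ → ℂ :=
  fun p => wdz (wdz ρ) p * (wdw ρ p) ^ 2
    - 2 * wdw (wdz ρ) p * wdz ρ p * wdw ρ p
    + wdw (wdw ρ) p * (wdz ρ p) ^ 2

/-- The row functions of the matrix `A_n(ρ)`: for `i ≤ n` the monomial `ρ_z^i ρ_w^{n-i}`,
and for `i = n + 1 + s` (with `0 ≤ s ≤ n - 3`) the function `ρ_z^s ρ_w^{n-3-s} ρ_{Z²}(L,L)`. -/
def rowA (ρ : ℂ × ℂ → ℂ) (n i : ℕ) : ℂ × ℂ → ℂ :=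
  if i ≤ n then fun p => (wdz ρ p) ^ i * (wdw ρ p) ^ (n - i)
  else fun p => (wdz ρ p) ^ (i - (n + 1)) * (wdw ρ p) ^ (n - 3 - (i - (n + 1))) * rhoZ2LL ρ p

/-- The `(2n-1) × (2n-1)` matrix `A_n(ρ)` at the point `p`; the `(i,j)` entry is
`L̄^j` applied to the `i`-th row function, evaluated at `p`. -/
def matA (ρ : ℂ × ℂ → ℂ) (n : ℕ) (p : ℂ × ℂ) :
    Matrix (Fin (2 * n - 1)) (Fin (2 * n - 1)) ℂ :=
  fun i j => (Lbar ρ)^[(j : ℕ)] (rowA ρ n (i : ℕ)) p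

/-- The `(n+1) × (n+1)` matrix `D_n(ρ) = (L̄^j (ρ_z^k ρ_w^{n-k}))_{0 ≤ j,k ≤ n}` at `p`. -/
def matD (ρ : ℂ × ℂ → ℂ) (n : ℕ) (p : ℂ × ℂ) : Matrix (Fin (n + 1)) (Fin (n + 1)) ℂ :=
  fun k j => (Lbar ρ)^[(j : ℕ)] (fun q => (wdz ρ q) ^ (k : ℕ) * (wdw ρ q) ^ (n - (k : ℕ))) p

/-- The determinant of the complex Jacobian matrix of a map `H : ℂ² → ℂ²`
(computed via Wirtinger derivatives of the two components). -/
def detJac (H : ℂ × ℂ → ℂ × ℂ) (p : ℂ × ℂ) : ℂ :=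
  wdz (fun q => (H q).1) p * wdw (fun q => (H q).2) p
    - wdw (fun q => (H q).1) p * wdz (fun q => (H q).2) p

/-- The operator `L̄₀ := -w ∂_z̄ + z ∂_w̄` (the operator `L̄` of the sphere). -/
def Lbar0 (f : ℂ × ℂ → ℂ) : ℂ × ℂ → ℂ :=
  fun p => -p.2 * wdzb f p + p.1 * wdwb f p

/-- `Q⁰(R) := L̄₀⁴ ( w̄² R_zz - 2 z̄ w̄ R_zw + z̄² R_ww )`. -/
def Q0 (R : ℂ × ℂ → ℂ) : ℂ × ℂ → ℂ :=
  Lbar0^[4] (fun p => (starRingEnd ℂ p.2) ^ 2 * wdz (wdz R) p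
    - 2 * starRingEnd ℂ p.1 * starRingEnd ℂ p.2 * wdw (wdz R) p
    + (starRingEnd ℂ p.1) ^ 2 * wdw (wdw R) p)

lemma fderiv_M_apply (C : ℂ) (a b : ℕ) (z w : ℂ) (h : ℂ × ℂ) :
    fderiv ℝ (fun Z : ℂ × ℂ => C * (Z.1 ^ a * (starRingEnd ℂ Z.2) ^ b)) (z, w) h
      = C * ((a : ℂ) * z ^ (a - 1) * (starRingEnd ℂ w) ^ b * h.1
          + (b : ℂ) * z ^ a * (starRingEnd ℂ w) ^ (b - 1) * starRingEnd ℂ h.2) := by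
  have hz : HasFDerivAt (fun x : ℂ => x ^ a)
      ((ContinuousLinearMap.smulRight (1 : ℂ →L[ℂ] ℂ) ((a : ℂ) * z ^ (a - 1))).restrictScalars ℝ) z :=
    (hasDerivAt_pow a z).hasFDerivAt.restrictScalars ℝ
  have h1 := hz.comp (z, w) (hasFDerivAt_fst (𝕜 := ℝ) (p := (z, w)))
  have hcj : HasFDerivAt (fun x : ℂ => starRingEnd ℂ x)
      (Complex.conjCLE.toContinuousLinearMap) w := by
    exact Complex.conjCLE.hasFDerivAt (x := w)
  have hw0 : HasFDerivAt (fun x : ℂ => x ^ b)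
      ((ContinuousLinearMap.smulRight (1 : ℂ →L[ℂ] ℂ) ((b : ℂ) * (starRingEnd ℂ w) ^ (b - 1))).restrictScalars ℝ)
      (starRingEnd ℂ w) :=
    (hasDerivAt_pow b _).hasFDerivAt.restrictScalars ℝ
  have hw1 := (hw0.comp w hcj).comp (z, w) (hasFDerivAt_snd (𝕜 := ℝ) (p := (z, w)))
  have hmul := (h1.mul hw1).const_mul C
  have hmul' : HasFDerivAt (fun Z : ℂ × ℂ => C * (Z.1 ^ a * (starRingEnd ℂ Z.2) ^ b)) _ (z, w) := hmul
  rw [hmul'.fderiv]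
  simp [ContinuousLinearMap.smulRight_apply, Complex.conjCLE_apply]
  ring

lemma fderiv_N_apply (C : ℂ) (c d : ℕ) (z w : ℂ) (h : ℂ × ℂ) :
    fderiv ℝ (fun Z : ℂ × ℂ => C * (Z.2 ^ c * (starRingEnd ℂ Z.1) ^ d)) (z, w) h
      = C * ((c : ℂ) * w ^ (c - 1) * (starRingEnd ℂ z) ^ d * h.2
          + (d : ℂ) * w ^ c * (starRingEnd ℂ z) ^ (d - 1) * starRingEnd ℂ h.1) := by
  have hz : HasFDerivAt (fun x : ℂ => x ^ c)
      ((ContinuousLinearMap.smulRight (1 : ℂ →L[ℂ] ℂ) ((c : ℂ) * w ^ (c - 1))).restrictScalars ℝ) w :=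
    (hasDerivAt_pow c w).hasFDerivAt.restrictScalars ℝ
  have h1 := hz.comp (z, w) (hasFDerivAt_snd (𝕜 := ℝ) (p := (z, w)))
  have hcj : HasFDerivAt (fun x : ℂ => starRingEnd ℂ x)
      (Complex.conjCLE.toContinuousLinearMap) z := by
    exact Complex.conjCLE.hasFDerivAt (x := z)
  have hw0 : HasFDerivAt (fun x : ℂ => x ^ d)
      ((ContinuousLinearMap.smulRight (1 : ℂ →L[ℂ] ℂ) ((d : ℂ) * (starRingEnd ℂ z) ^ (d - 1))).restrictScalars ℝ)
      (starRingEnd ℂ z) :=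
    (hasDerivAt_pow d _).hasFDerivAt.restrictScalars ℝ
  have hw1 := (hw0.comp z hcj).comp (z, w) (hasFDerivAt_fst (𝕜 := ℝ) (p := (z, w)))
  have hmul := (h1.mul hw1).const_mul C
  have hmul' : HasFDerivAt (fun Z : ℂ × ℂ => C * (Z.2 ^ c * (starRingEnd ℂ Z.1) ^ d)) _ (z, w) := hmul
  rw [hmul'.fderiv]
  simp [ContinuousLinearMap.smulRight_apply, Complex.conjCLE_apply]
  ring

-- M family Wirtinger derivatives
lemma wdz_M (C : ℂ) (a b : ℕ) :
    wdz (fun Z : ℂ × ℂ => C * (Z.1 ^ a * (starRingEnd ℂ Z.2) ^ b))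
      = fun Z => (C * a) * (Z.1 ^ (a - 1) * (starRingEnd ℂ Z.2) ^ b) := by
  funext P; obtain ⟨z, w⟩ := P
  simp only [wdz, fderiv_M_apply]
  simp only [map_zero, _root_.map_one, Complex.conj_I, mul_zero, zero_mul]
  ring_nf
  rw [Complex.I_sq]
  ring

lemma wdzb_M (C : ℂ) (a b : ℕ) :
    wdzb (fun Z : ℂ × ℂ => C * (Z.1 ^ a * (starRingEnd ℂ Z.2) ^ b)) = fun _ => 0 := by
  funext P; obtain ⟨z, w⟩ := P
  simp only [wdzb, fderiv_M_apply]
  simp only [map_zero, _root_.map_one, Complex.conj_I, mul_zero, zero_mul]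
  ring_nf
  rw [Complex.I_sq]
  ring

lemma wdw_M (C : ℂ) (a b : ℕ) :
    wdw (fun Z : ℂ × ℂ => C * (Z.1 ^ a * (starRingEnd ℂ Z.2) ^ b)) = fun _ => 0 := by
  funext P; obtain ⟨z, w⟩ := P
  simp only [wdw, fderiv_M_apply]
  simp only [map_zero, _root_.map_one, Complex.conj_I, mul_zero, zero_mul]
  ring_nf
  rw [Complex.I_sq]
  ring

lemma wdwb_M (C : ℂ) (a b : ℕ) :
    wdwb (fun Z : ℂ × ℂ => C * (Z.1 ^ a * (starRingEnd ℂ Z.2) ^ b))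
      = fun Z => (C * b) * (Z.1 ^ a * (starRingEnd ℂ Z.2) ^ (b - 1)) := by
  funext P; obtain ⟨z, w⟩ := P
  simp only [wdwb, fderiv_M_apply]
  simp only [map_zero, _root_.map_one, Complex.conj_I, mul_zero, zero_mul]
  ring_nf
  rw [Complex.I_sq]
  ring

-- N family
lemma wdz_N (C : ℂ) (c d : ℕ) :
    wdz (fun Z : ℂ × ℂ => C * (Z.2 ^ c * (starRingEnd ℂ Z.1) ^ d)) = fun _ => 0 := by
  funext P; obtain ⟨z, w⟩ := P
  simp only [wdz, fderiv_N_apply]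
  simp only [map_zero, _root_.map_one, Complex.conj_I, mul_zero, zero_mul]
  ring_nf
  rw [Complex.I_sq]
  ring

lemma wdzb_N (C : ℂ) (c d : ℕ) :
    wdzb (fun Z : ℂ × ℂ => C * (Z.2 ^ c * (starRingEnd ℂ Z.1) ^ d))
      = fun Z => (C * d) * (Z.2 ^ c * (starRingEnd ℂ Z.1) ^ (d - 1)) := by
  funext P; obtain ⟨z, w⟩ := P
  simp only [wdzb, fderiv_N_apply]
  simp only [map_zero, _root_.map_one, Complex.conj_I, mul_zero, zero_mul]
  ring_nf
  rw [Complex.I_sq]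
  ring

lemma wdw_N (C : ℂ) (c d : ℕ) :
    wdw (fun Z : ℂ × ℂ => C * (Z.2 ^ c * (starRingEnd ℂ Z.1) ^ d))
      = fun Z => (C * c) * (Z.2 ^ (c - 1) * (starRingEnd ℂ Z.1) ^ d) := by
  funext P; obtain ⟨z, w⟩ := P
  simp only [wdw, fderiv_N_apply]
  simp only [map_zero, _root_.map_one, Complex.conj_I, mul_zero, zero_mul]
  ring_nf
  rw [Complex.I_sq]
  ring

lemma wdwb_N (C : ℂ) (c d : ℕ) :
    wdwb (fun Z : ℂ × ℂ => C * (Z.2 ^ c * (starRingEnd ℂ Z.1) ^ d)) = fun _ => 0 := by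
  funext P; obtain ⟨z, w⟩ := P
  simp only [wdwb, fderiv_N_apply]
  simp only [map_zero, _root_.map_one, Complex.conj_I, mul_zero, zero_mul]
  ring_nf
  rw [Complex.I_sq]
  ring

lemma Lbar0_M (C : ℂ) (a b : ℕ) :
    Lbar0 (fun Z : ℂ × ℂ => C * (Z.1 ^ a * (starRingEnd ℂ Z.2) ^ (b + 1)))
      = fun Z => (C * (b + 1)) * (Z.1 ^ (a + 1) * (starRingEnd ℂ Z.2) ^ b) := by
  funext P
  simp only [Lbar0, wdzb_M, wdwb_M, Nat.add_sub_cancel, Nat.cast_add, Nat.cast_one]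
  ring

lemma Lbar0_N (C : ℂ) (c d : ℕ) :
    Lbar0 (fun Z : ℂ × ℂ => C * (Z.2 ^ c * (starRingEnd ℂ Z.1) ^ (d + 1)))
      = fun Z => (-(C * (d + 1))) * (Z.2 ^ (c + 1) * (starRingEnd ℂ Z.1) ^ d) := by
  funext P
  simp only [Lbar0, wdzb_N, wdwb_N, Nat.add_sub_cancel, Nat.cast_add, Nat.cast_one]
  ring

lemma wdz_zero : wdz (fun _ : ℂ × ℂ => (0:ℂ)) = fun _ => 0 := by
  funext P; simp [wdz]

lemma wdw_zero : wdw (fun _ : ℂ × ℂ => (0:ℂ)) = fun _ => 0 := by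
  funext P; simp [wdw]

lemma Lbar0_four_M (C : ℂ) (a b : ℕ) (P : ℂ × ℂ) :
    Lbar0^[4] (fun Z : ℂ × ℂ => C * (Z.1 ^ a * (starRingEnd ℂ Z.2) ^ (b + 1 + 1 + 1 + 1))) P
      = (C * (b + 4) * (b + 3) * (b + 2) * (b + 1)) * (P.1 ^ (a + 4) * (starRingEnd ℂ P.2) ^ b) := by
  show Lbar0 (Lbar0 (Lbar0 (Lbar0 (fun Z : ℂ × ℂ =>
      C * (Z.1 ^ a * (starRingEnd ℂ Z.2) ^ (b + 1 + 1 + 1 + 1)))))) P = _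
  rw [Lbar0_M, Lbar0_M, Lbar0_M, Lbar0_M]
  push_cast
  ring

lemma Lbar0_four_N (C : ℂ) (c d : ℕ) (P : ℂ × ℂ) :
    Lbar0^[4] (fun Z : ℂ × ℂ => C * (Z.2 ^ c * (starRingEnd ℂ Z.1) ^ (d + 1 + 1 + 1 + 1))) P
      = (C * (d + 4) * (d + 3) * (d + 2) * (d + 1)) * (P.2 ^ (c + 4) * (starRingEnd ℂ P.1) ^ d) := by
  show Lbar0 (Lbar0 (Lbar0 (Lbar0 (fun Z : ℂ × ℂ =>
      C * (Z.2 ^ c * (starRingEnd ℂ Z.1) ^ (d + 1 + 1 + 1 + 1)))))) P = _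
  rw [Lbar0_N, Lbar0_N, Lbar0_N, Lbar0_N]
  push_cast
  ring

/-- **Computation of `Q⁰` on the basic almost circular monomials** (Section 5.2): for `p ≥ 2`,
`Q⁰(z^p w̄^p) = (p+2)(p+1)p²(p-1)² z^{p+2} w̄^{p-2}` and
`Q⁰(w^p z̄^p) = (p+2)(p+1)p²(p-1)² w^{p+2} z̄^{p-2}`. -/
theorem Q0_monomials (p : ℕ) (hp : 2 ≤ p) (z w : ℂ) :
    Q0 (fun Z => Z.1 ^ p * (starRingEnd ℂ Z.2) ^ p) (z, w) =
        (((p + 2) * (p + 1) * p ^ 2 * (p - 1) ^ 2 : ℕ) : ℂ) *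
          z ^ (p + 2) * (starRingEnd ℂ w) ^ (p - 2) ∧
      Q0 (fun Z => Z.2 ^ p * (starRingEnd ℂ Z.1) ^ p) (z, w) =
        (((p + 2) * (p + 1) * p ^ 2 * (p - 1) ^ 2 : ℕ) : ℂ) *
          w ^ (p + 2) * (starRingEnd ℂ z) ^ (p - 2) := by
  obtain ⟨q, rfl⟩ : ∃ q, p = q + 2 := ⟨p - 2, by omega⟩
  constructor
  · -- first monomial
    have hR : (fun Z : ℂ × ℂ => Z.1 ^ (q + 2) * (starRingEnd ℂ Z.2) ^ (q + 2))
        = fun Z : ℂ × ℂ => (1 : ℂ) * (Z.1 ^ (q + 2) * (starRingEnd ℂ Z.2) ^ (q + 2)) := by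
      funext Z; ring
    have key : (fun P : ℂ × ℂ => (starRingEnd ℂ P.2) ^ 2 *
          wdz (wdz (fun Z : ℂ × ℂ => Z.1 ^ (q + 2) * (starRingEnd ℂ Z.2) ^ (q + 2))) P
        - 2 * starRingEnd ℂ P.1 * starRingEnd ℂ P.2 *
          wdw (wdz (fun Z : ℂ × ℂ => Z.1 ^ (q + 2) * (starRingEnd ℂ Z.2) ^ (q + 2))) P
        + (starRingEnd ℂ P.1) ^ 2 *
          wdw (wdw (fun Z : ℂ × ℂ => Z.1 ^ (q + 2) * (starRingEnd ℂ Z.2) ^ (q + 2))) P)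
        = fun Z : ℂ × ℂ => ((((q + 2) * (q + 1) : ℕ)) : ℂ) *
            (Z.1 ^ q * (starRingEnd ℂ Z.2) ^ (q + 1 + 1 + 1 + 1)) := by
      funext P
      rw [hR]
      simp only [wdz_M, wdw_M, wdw_zero]
      simp only [show q + 2 - 1 = q + 1 from by omega, show q + 1 - 1 = q from by omega]
      push_cast
      ring
    simp only [Q0]
    rw [key, Lbar0_four_M]
    simp only [show q + 2 - 2 = q from by omega, show q + 2 - 1 = q + 1 from by omega]
    push_cast
    ring
  · -- second monomial
    have hR : (fun Z : ℂ × ℂ => Z.2 ^ (q + 2) * (starRingEnd ℂ Z.1) ^ (q + 2))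
        = fun Z : ℂ × ℂ => (1 : ℂ) * (Z.2 ^ (q + 2) * (starRingEnd ℂ Z.1) ^ (q + 2)) := by
      funext Z; ring
    have key : (fun P : ℂ × ℂ => (starRingEnd ℂ P.2) ^ 2 *
          wdz (wdz (fun Z : ℂ × ℂ => Z.2 ^ (q + 2) * (starRingEnd ℂ Z.1) ^ (q + 2))) P
        - 2 * starRingEnd ℂ P.1 * starRingEnd ℂ P.2 *
          wdw (wdz (fun Z : ℂ × ℂ => Z.2 ^ (q + 2) * (starRingEnd ℂ Z.1) ^ (q + 2))) P
        + (starRingEnd ℂ P.1) ^ 2 *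
          wdw (wdw (fun Z : ℂ × ℂ => Z.2 ^ (q + 2) * (starRingEnd ℂ Z.1) ^ (q + 2))) P)
        = fun Z : ℂ × ℂ => ((((q + 2) * (q + 1) : ℕ)) : ℂ) *
            (Z.2 ^ q * (starRingEnd ℂ Z.1) ^ (q + 1 + 1 + 1 + 1)) := by
      funext P
      rw [hR]
      simp only [wdz_N, wdw_N, wdz_zero, wdw_zero]
      simp only [show q + 2 - 1 = q + 1 from by omega, show q + 1 - 1 = q from by omega]
      push_cast
      ring
    simp only [Q0]
    rw [key, Lbar0_four_N]
    simp only [show q + 2 - 2 = q from by omega, show q + 2 - 1 = q + 1 from by omega]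
    push_cast
    ring
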